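/- (Theorem 1: FBA does not improve the NC spatially smoothed signal subspace.) Let M, m, L, N be positive integers and let J_1,…,J_L ∈ ℝ^{m×M} be matrices satisfying the exchange symmetry Π_m J_ℓ Π_M = J_{L+1−ℓ} for all 1 ≤ ℓ ≤ L. For X ∈ ℂ^{M×N} define the augmented matrix X^{nc} = [X; Π_M conj(X)] ∈ ℂ^{2M×N}, the NC spatially smoothed matrix X_SS = [(I_2⊗J_1)X^{nc}, (I_2⊗J_2)X^{nc}, …, (I_2⊗J_L)X^{nc}] ∈ ℂ^{2m×NL} (horizontal block concatenation), and the forward–backward-averaged matrix X̃ = [X_SS, Π_{2m}·conj(X_SS)·Π_{NL}] ∈ ℂ^{2m×2NL}. Then X̃ X̃^H = 2 · X_SS X_SS^H, and consequently the column space of X̃ equals the column space of X_SS. -/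

import Mathlib

open Matrix Complex
open scoped Kronecker

/-- The `K × K` exchange matrix (ones on the antidiagonal, zeros elsewhere), over a
general scalar type. -/
def exch (α : Type*) [Zero α] [One α] (K : ℕ) : Matrix (Fin K) (Fin K) α :=
  Matrix.of fun i j => if (i : ℕ) + (j : ℕ) + 1 = K then 1 else 0

/-- The augmented (non-circular) measurement matrix `X^{nc} = [X; Π_M conj(X)]`,
indexed blockwise by `Fin 2 × Fin M`. -/
noncomputable def Xnc {M N : ℕ} (X : Matrix (Fin M) (Fin N) ℂ) :
    Matrix (Fin 2 × Fin M) (Fin N) ℂ :=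
  Matrix.of fun i j =>
    if i.1 = 0 then X i.2 j else (exch ℂ M * X.map (starRingEnd ℂ)) i.2 j

/-- The NC spatially smoothed matrix
`X_SS = [(I₂⊗J₁)X^{nc}, …, (I₂⊗J_L)X^{nc}]`, with the horizontal block concatenation
indexed by `Fin L × Fin N` (block index first). -/
noncomputable def XSS {M m L N : ℕ} (J : Fin L → Matrix (Fin m) (Fin M) ℝ)
    (X : Matrix (Fin M) (Fin N) ℂ) :
    Matrix (Fin 2 × Fin m) (Fin L × Fin N) ℂ :=
  Matrix.of fun i c =>
    (((1 : Matrix (Fin 2) (Fin 2) ℂ) ⊗ₖ (J c.1).map (Complex.ofReal)) * Xnc X) i c.2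

/-- The forward–backward-averaged matrix `X̃ = [X_SS, Π_{2m} conj(X_SS) Π_{NL}]`.
On the mixed-radix index sets, the exchange matrices `Π_{2m}` and `Π_{NL}` are the
Kronecker products `Π₂ ⊗ Π_m` and `Π_L ⊗ Π_N` of the one-dimensional exchange matrices. -/
noncomputable def Xfba {M m L N : ℕ} (J : Fin L → Matrix (Fin m) (Fin M) ℝ)
    (X : Matrix (Fin M) (Fin N) ℂ) :
    Matrix (Fin 2 × Fin m) (Fin 2 × (Fin L × Fin N)) ℂ :=
  Matrix.of fun i c =>
    if c.1 = 0 then XSS J X i c.2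
    else ((exch ℂ 2 ⊗ₖ exch ℂ m) * (XSS J X).map (starRingEnd ℂ) *
      (exch ℂ L ⊗ₖ exch ℂ N)) i c.2

lemma exch_apply (α : Type*) [Zero α] [One α] {K : ℕ} (i j : Fin K) :
    exch α K i j = if j = i.rev then 1 else 0 := by
  unfold exch
  simp only [Matrix.of_apply]
  have hi := i.isLt; have hj := j.isLt
  by_cases hc : (i : ℕ) + (j : ℕ) + 1 = K
  · rw [if_pos hc, if_pos]
    apply Fin.ext
    simp only [Fin.val_rev]
    omega
  · rw [if_neg hc, if_neg]
    intro hjk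
    apply hc
    rw [hjk]
    simp only [Fin.val_rev]
    omega

lemma exch_apply' (α : Type*) [Zero α] [One α] {K : ℕ} (i j : Fin K) :
    exch α K i j = if i = j.rev then 1 else 0 := by
  rw [exch_apply]
  congr 1
  simp only [eq_iff_iff]
  constructor
  · rintro rfl; simp [Fin.rev_rev]
  · rintro rfl; simp [Fin.rev_rev]

lemma exch_mul {α : Type*} [NonAssocSemiring α] {K n : ℕ}
    (A : Matrix (Fin K) (Fin n) α) (i : Fin K) (j : Fin n) :
    (exch α K * A) i j = A i.rev j := by
  simp [Matrix.mul_apply, exch_apply]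

lemma mul_exch {α : Type*} [NonAssocSemiring α] {K n : ℕ}
    (A : Matrix (Fin n) (Fin K) α) (i : Fin n) (j : Fin K) :
    (A * exch α K) i j = A i j.rev := by
  simp [Matrix.mul_apply, exch_apply']

lemma Xnc_zero {M N : ℕ} (X : Matrix (Fin M) (Fin N) ℂ) (q : Fin M) (n : Fin N) :
    Xnc X (0, q) n = X q n := by
  simp [Xnc]

lemma Xnc_one {M N : ℕ} (X : Matrix (Fin M) (Fin N) ℂ) (q : Fin M) (n : Fin N) :
    Xnc X (1, q) n = starRingEnd ℂ (X q.rev n) := by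
  simp [Xnc, exch_mul]

lemma XSS_apply {M m L N : ℕ} (J : Fin L → Matrix (Fin m) (Fin M) ℝ)
    (X : Matrix (Fin M) (Fin N) ℂ) (a : Fin 2) (b : Fin m) (ℓ : Fin L) (n : Fin N) :
    XSS J X (a, b) (ℓ, n) = ∑ q : Fin M, (J ℓ b q : ℂ) * Xnc X (a, q) n := by
  simp only [XSS, Matrix.of_apply, Matrix.mul_apply, Fintype.sum_prod_type,
    Matrix.kroneckerMap_apply, Matrix.one_apply, Matrix.map_apply]
  rw [Finset.sum_eq_single a]
  · simp
  · intro p _ hp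
    simp [Ne.symm hp]
  · simp

lemma J_rev_apply {M m L : ℕ} (J : Fin L → Matrix (Fin m) (Fin M) ℝ)
    (hJ : ∀ ℓ : Fin L, exch ℝ m * J ℓ * exch ℝ M = J ℓ.rev)
    (ℓ : Fin L) (b : Fin m) (q : Fin M) :
    J ℓ.rev b q = J ℓ b.rev q.rev := by
  rw [← hJ ℓ, mul_exch, exch_mul]

lemma XSS_conj_symm {M m L N : ℕ} (J : Fin L → Matrix (Fin m) (Fin M) ℝ)
    (hJ : ∀ ℓ : Fin L, exch ℝ m * J ℓ * exch ℝ M = J ℓ.rev)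
    (X : Matrix (Fin M) (Fin N) ℂ) (a : Fin 2) (b : Fin m) (ℓ : Fin L) (n : Fin N) :
    starRingEnd ℂ (XSS J X (a.rev, b.rev) (ℓ.rev, n)) = XSS J X (a, b) (ℓ, n) := by
  rw [XSS_apply, XSS_apply, map_sum]
  rw [← Equiv.sum_comp (Fin.revPerm (n := M))]
  apply Finset.sum_congr rfl
  intro q _
  simp only [Fin.revPerm_apply]
  rw [J_rev_apply J hJ]
  rw [Fin.rev_rev, Fin.rev_rev]
  fin_cases a
  · show starRingEnd ℂ (_ * Xnc X (Fin.rev 0, q.rev) n) = _ * Xnc X (0, q) n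
    rw [show Fin.rev (0 : Fin 2) = 1 from rfl, Xnc_zero, Xnc_one, Fin.rev_rev]
    simp [mul_comm]
  · show starRingEnd ℂ (_ * Xnc X (Fin.rev 1, q.rev) n) = _ * Xnc X (1, q) n
    rw [show Fin.rev (1 : Fin 2) = 0 from rfl, Xnc_zero, Xnc_one]
    simp [mul_comm]

lemma exchK_mul {α : Type*} [CommRing α] {K1 K2 : ℕ} {γ : Type*} [Fintype γ]
    (A : Matrix (Fin K1 × Fin K2) γ α) (i : Fin K1 × Fin K2) (c : γ) :
    ((exch α K1 ⊗ₖ exch α K2) * A) i c = A (i.1.rev, i.2.rev) c := by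
  simp only [Matrix.mul_apply, Fintype.sum_prod_type, Matrix.kroneckerMap_apply,
    exch_apply]
  rw [Finset.sum_eq_single i.1.rev]
  · rw [Finset.sum_eq_single i.2.rev]
    · simp
    · intro b _ hb; simp [hb]
    · simp
  · intro p _ hp
    simp [hp]
  · simp

lemma mul_exchK {α : Type*} [CommRing α] {K1 K2 : ℕ} {γ : Type*} [Fintype γ]
    (A : Matrix γ (Fin K1 × Fin K2) α) (r : γ) (j : Fin K1 × Fin K2) :
    (A * (exch α K1 ⊗ₖ exch α K2)) r j = A r (j.1.rev, j.2.rev) := by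
  simp only [Matrix.mul_apply, Fintype.sum_prod_type, Matrix.kroneckerMap_apply,
    exch_apply']
  rw [Finset.sum_eq_single j.1.rev]
  · rw [Finset.sum_eq_single j.2.rev]
    · simp
    · intro b _ hb; simp [hb]
    · simp
  · intro p _ hp
    simp [hp]
  · simp

lemma Xfba_zero {M m L N : ℕ} (J : Fin L → Matrix (Fin m) (Fin M) ℝ)
    (X : Matrix (Fin M) (Fin N) ℂ) (i : Fin 2 × Fin m) (c : Fin L × Fin N) :
    Xfba J X i (0, c) = XSS J X i c := by
  simp [Xfba]

lemma Xfba_one {M m L N : ℕ} (J : Fin L → Matrix (Fin m) (Fin M) ℝ)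
    (hJ : ∀ ℓ : Fin L, exch ℝ m * J ℓ * exch ℝ M = J ℓ.rev)
    (X : Matrix (Fin M) (Fin N) ℂ) (i : Fin 2 × Fin m) (ℓ : Fin L) (n : Fin N) :
    Xfba J X i (1, (ℓ, n)) = XSS J X i (ℓ, n.rev) := by
  have h1 : ((1 : Fin 2), (ℓ, n)).1 = (0 : Fin 2) ↔ False := by simp
  simp only [Xfba, Matrix.of_apply, one_ne_zero, if_false]
  rw [mul_exchK, exchK_mul, Matrix.map_apply]
  simpa using XSS_conj_symm J hJ X i.1 i.2 ℓ n.rev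

/-- **Theorem 1** (FBA does not improve the NC spatially smoothed signal subspace).
If the selection matrices satisfy the exchange symmetry `Π_m J_ℓ Π_M = J_{L+1-ℓ}`,
then the forward–backward-averaged matrix `X̃` satisfies `X̃ X̃ᴴ = 2 X_SS X_SSᴴ`, and
consequently the column space of `X̃` equals the column space of `X_SS`. -/
theorem fba_no_gain (M m L N : ℕ) (hM : 0 < M) (hm : 0 < m) (hL : 0 < L) (hN : 0 < N)
    (J : Fin L → Matrix (Fin m) (Fin M) ℝ)
    (hJ : ∀ ℓ : Fin L, exch ℝ m * J ℓ * exch ℝ M = J ℓ.rev)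
    (X : Matrix (Fin M) (Fin N) ℂ) :
    Xfba J X * (Xfba J X)ᴴ = (2 : ℂ) • (XSS J X * (XSS J X)ᴴ) ∧
    LinearMap.range (Matrix.mulVecLin (Xfba J X))
      = LinearMap.range (Matrix.mulVecLin (XSS J X)) := by
  constructor
  · ext i j
    simp only [Matrix.mul_apply, Matrix.conjTranspose_apply, Matrix.smul_apply,
      smul_eq_mul]
    rw [Fintype.sum_prod_type, Fin.sum_univ_two]
    have e0 : (∑ c : Fin L × Fin N,
          Xfba J X i ((0 : Fin 2), c) * star (Xfba J X j ((0 : Fin 2), c)))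
        = ∑ c : Fin L × Fin N, XSS J X i c * star (XSS J X j c) := by
      refine Finset.sum_congr rfl fun c _ => ?_
      rw [Xfba_zero, Xfba_zero]
    have e1 : (∑ c : Fin L × Fin N,
          Xfba J X i ((1 : Fin 2), c) * star (Xfba J X j ((1 : Fin 2), c)))
        = ∑ c : Fin L × Fin N, XSS J X i c * star (XSS J X j c) := by
      rw [← Equiv.sum_comp ((Equiv.refl (Fin L)).prodCongr (Fin.revPerm (n := N)))
        (fun c => XSS J X i c * star (XSS J X j c))]
      refine Finset.sum_congr rfl fun c _ => ?_
      rw [show Xfba J X i ((1 : Fin 2), c) = XSS J X i (c.1, c.2.rev) from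
        Xfba_one J hJ X i c.1 c.2,
        show Xfba J X j ((1 : Fin 2), c) = XSS J X j (c.1, c.2.rev) from
        Xfba_one J hJ X j c.1 c.2]
      rfl
    rw [e0, e1]
    ring
  · set Q : Matrix (Fin L × Fin N) (Fin 2 × (Fin L × Fin N)) ℂ :=
      Matrix.of fun r c =>
        if c.1 = 0 then (if r = c.2 then 1 else 0)
        else (if r = (c.2.1, c.2.2.rev) then 1 else 0) with hQdef
    have hQ : Xfba J X = XSS J X * Q := by
      ext i c
      obtain ⟨c1, ℓ, n⟩ := c
      simp only [Matrix.mul_apply, hQdef, Matrix.of_apply]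
      by_cases hc : c1 = 0
      · subst hc
        rw [Xfba_zero]
        simp
      · have hc1 : c1 = 1 := by
          have h2 := c1.isLt
          have h0 : (c1 : ℕ) ≠ 0 := fun h => hc (Fin.ext h)
          exact Fin.ext (by omega)
        subst hc1
        rw [Xfba_one J hJ X i ℓ n]
        simp
    have hR : XSS J X = Xfba J X *
        (Matrix.of fun r c => if r = ((0 : Fin 2), c) then (1 : ℂ) else 0 :
          Matrix (Fin 2 × (Fin L × Fin N)) (Fin L × Fin N) ℂ) := by
      ext i c
      simp only [Matrix.mul_apply, Matrix.of_apply, mul_ite, mul_one, mul_zero,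
        Finset.sum_ite_eq', Finset.mem_univ, if_true]
      rw [Xfba_zero]
    apply le_antisymm
    · rw [hQ, Matrix.mulVecLin_mul]
      exact LinearMap.range_comp_le_range _ _
    · conv_lhs => rw [hR]
      rw [Matrix.mulVecLin_mul]
      exact LinearMap.range_comp_le_range _ _
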